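/- arXiv:math/0409252 — 3 statements merged into one kernel-verified Lean document; each statement's English description precedes it below -/
import Mathlib

section
/- Let (X,ℬ,m,T) be an exact nonsingular endomorphism (i.e. ⋂_{n≥0} T⁻ⁿℬ is trivial mod m), 𝔾 a locally compact Polish group, f : X → 𝔾 measurable, and T_f(x,g) = (Tx, f(x)g). If F : X × 𝔾 → ℝ is bounded measurable, measurable with respect to the tail σ-algebra 𝒯(T_f), and invariant under every Q_t(x,g) = (x,gt⁻¹), then F is constant almost everywhere with respect to m × m_𝔾. -/
open MeasureTheory

/-- If `T` is exact then every bounded measurable function on `X × 𝔾` which is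
measurable with respect to the tail σ-algebra of the skew product `T_f` and invariant
under every right translation `Q_t` is a.e. constant w.r.t. `m × m_𝔾`. -/
theorem tail_measurable_Q_invariant_const_of_exact {X G : Type*}
    [MeasurableSpace X] [MeasurableSpace G]
    [Group G] [TopologicalSpace G] [IsTopologicalGroup G] [PolishSpace G]
    [LocallyCompactSpace G] [BorelSpace G]
    (m : Measure X) [IsProbabilityMeasure m]
    (mG : Measure G) [mG.IsHaarMeasure]
    (T : X → X) (hT : Measurable T)
    (hns : ∀ A : Set X, MeasurableSet A → (m (T ⁻¹' A) = 0 ↔ m A = 0))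
    (hexact : ∀ A : Set X,
      (∀ n : ℕ, ∃ B : Set X, MeasurableSet B ∧ A = T^[n] ⁻¹' B) →
      m A = 0 ∨ m Aᶜ = 0)
    (f : X → G) (hf : Measurable f)
    (F : X × G → ℝ) (hFbdd : ∃ C : ℝ, ∀ q, |F q| ≤ C) (hFmeas : Measurable F)
    (hFtail : ∀ n : ℕ, ∃ Fn : X × G → ℝ, Measurable Fn ∧
      F = Fn ∘ (fun q : X × G => (T q.1, f q.1 * q.2))^[n])
    (hFQ : ∀ t : G, ∀ q : X × G, F (q.1, q.2 * t⁻¹) = F q) :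
    ∃ c : ℝ, ∀ᵐ q ∂(m.prod mG), F q = c := by
  classical
  obtain ⟨C, hC⟩ := hFbdd
  set Sk : X × G → X × G := fun q : X × G => (T q.1, f q.1 * q.2) with hSk
  -- the skew product structure of iterates
  have hiter : ∀ (n : ℕ) (x : X) (g : G),
      Sk^[n] (x, g) = (T^[n] x, (Sk^[n] (x, 1)).2 * g) := by
    intro n
    induction n with
    | zero => intro x g; simp
    | succ n ih =>
      intro x g
      rw [Function.iterate_succ_apply, Function.iterate_succ_apply]
      show Sk^[n] (T x, f x * g) = (T^[n] (T x), (Sk^[n] (T x, f x * 1)).2 * g)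
      rw [ih (T x) (f x * g), ih (T x) (f x * 1)]
      simp [mul_assoc]
  -- F only depends on the first coordinate
  have hF1 : ∀ (x : X) (g : G), F (x, g) = F (x, 1) := by
    intro x g
    have := hFQ g (x, g)
    simpa using this.symm
  set h : X → ℝ := fun x => F (x, 1) with hh
  have hhm : Measurable h := hFmeas.comp (measurable_id.prodMk measurable_const)
  have hhb : ∀ x, |h x| ≤ C := fun x => hC (x, 1)
  -- zero-one law for superlevel sets of h
  have h01 : ∀ c : ℝ, m {x | c < h x} = 0 ∨ m {x | c < h x}ᶜ = 0 := by
    intro c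
    apply hexact
    intro n
    obtain ⟨Fn, hFnm, hFnEq⟩ := hFtail n
    refine ⟨{y | c < Fn (y, 1)}, by
      exact measurableSet_lt measurable_const
        (hFnm.comp (measurable_id.prodMk measurable_const)), ?_⟩
    ext x
    have key : h x = Fn (T^[n] x, 1) := by
      have h1 : h x = F (x, ((Sk^[n] (x, 1)).2)⁻¹) := (hF1 x _).symm
      have h2 := congrFun hFnEq (x, ((Sk^[n] (x, 1)).2)⁻¹)
      have h3 := hiter n x ((Sk^[n] (x, 1)).2)⁻¹
      rw [Function.comp_apply, h3] at h2
      simp only [mul_inv_cancel] at h2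
      rw [h1, h2]
    simp only [Set.mem_setOf_eq, Set.mem_preimage, key]
  -- the constant
  set S : Set ℝ := {c : ℝ | m {x | c < h x} = 0} with hS
  have hmono : ∀ {c c' : ℝ}, c ≤ c' → c ∈ S → c' ∈ S := by
    intro c c' hcc hc
    exact measure_mono_null (fun x hx => lt_of_le_of_lt hcc hx) hc
  have hSne : S.Nonempty := by
    refine ⟨C, ?_⟩
    have : {x | C < h x} = ∅ := by
      ext x
      simp only [Set.mem_setOf_eq, Set.mem_empty_iff_false, iff_false, not_lt]
      exact le_trans (le_abs_self _) (hhb x)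
    simp [hS, this]
  have hSbdd : BddBelow S := by
    refine ⟨-C - 1, fun c hc => ?_⟩
    by_contra hlt
    push_neg at hlt
    have : {x | c < h x} = Set.univ := by
      ext x
      simp only [Set.mem_setOf_eq, Set.mem_univ, iff_true]
      have := (abs_le.mp (hhb x)).1
      linarith
    rw [hS, Set.mem_setOf_eq, this] at hc
    simp at hc
  set c₀ : ℝ := sInf S with hc₀
  -- above c₀ : null
  have habove : m {x | c₀ < h x} = 0 := by
    have hsub : {x | c₀ < h x} ⊆ ⋃ n : ℕ, {x | c₀ + 1 / (n + 1) < h x} := by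
      intro x hx
      have hpos : (0 : ℝ) < h x - c₀ := sub_pos.mpr hx
      obtain ⟨n, hn⟩ := exists_nat_one_div_lt hpos
      exact Set.mem_iUnion.mpr ⟨n, by simp only [Set.mem_setOf_eq]; linarith⟩
    refine measure_mono_null hsub (measure_iUnion_null fun n => ?_)
    have hpos : (0 : ℝ) < 1 / (n + 1) := by positivity
    have : c₀ < c₀ + 1 / (n + 1) := by linarith
    obtain ⟨c, hcS, hclt⟩ := (csInf_lt_iff hSbdd hSne).mp this
    exact hmono hclt.le hcS
  -- below c₀ : null
  have hbelow : m {x | h x < c₀} = 0 := by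
    have hsub : {x | h x < c₀} ⊆ ⋃ n : ℕ, {x | c₀ - 1 / (n + 1) < h x}ᶜ := by
      intro x hx
      have hpos : (0 : ℝ) < c₀ - h x := sub_pos.mpr hx
      obtain ⟨n, hn⟩ := exists_nat_one_div_lt hpos
      refine Set.mem_iUnion.mpr ⟨n, ?_⟩
      simp only [Set.mem_compl_iff, Set.mem_setOf_eq, not_lt]
      linarith
    refine measure_mono_null hsub (measure_iUnion_null fun n => ?_)
    have hpos : (0 : ℝ) < 1 / (n + 1) := by positivity
    have hnot : c₀ - 1 / (n + 1) ∉ S := fun hmem => by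
      have := csInf_le hSbdd hmem
      rw [← hc₀] at this
      linarith
    rcases h01 (c₀ - 1 / (n + 1)) with h0 | h0
    · exact absurd h0 hnot
    · exact h0
  -- conclude
  refine ⟨c₀, ?_⟩
  haveI : SigmaFinite mG := by infer_instance
  have hsub : {q : X × G | ¬ F q = c₀} ⊆
      ({x | c₀ < h x} ∪ {x | h x < c₀}) ×ˢ (Set.univ : Set G) := by
    rintro ⟨x, g⟩ hq
    simp only [Set.mem_setOf_eq] at hq
    have : F (x, g) = h x := hF1 x g
    rw [this] at hq
    constructor
    · rcases lt_or_gt_of_ne hq with hlt | hgt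
      · exact Or.inr hlt
      · exact Or.inl hgt
    · trivial
  have : (m.prod mG) {q : X × G | ¬ F q = c₀} = 0 := by
    refine measure_mono_null hsub ?_
    rw [Measure.prod_prod]
    have : m ({x | c₀ < h x} ∪ {x | h x < c₀}) = 0 :=
      measure_union_null habove hbelow
    rw [this, zero_mul]
  exact this
end

section
/- Let 𝔾 be a locally compact Polish group, ℍ ≤ 𝔾 a closed subgroup, let V be the translation 𝔾-action on 𝔾/ℍ with the quotient of Haar measure, and let S be a probability-preserving 𝔾-action on (Y,𝒞,ν) whose restriction S|_ℍ is ergodic. Then the product action V × S on (𝔾/ℍ) × Y is ergodic. -/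
open MeasureTheory

/-- If `S` is a probability preserving `𝔾`-action whose restriction to a closed
subgroup `ℍ` is ergodic, then the product of the translation `𝔾`-action on `𝔾/ℍ`
(with the quotient of Haar measure) with `S` is ergodic. -/
theorem translation_times_S_ergodic {G Y : Type*}
    [Group G] [TopologicalSpace G] [IsTopologicalGroup G] [PolishSpace G]
    [LocallyCompactSpace G] [MeasurableSpace G] [BorelSpace G]
    (mG : Measure G) [mG.IsHaarMeasure]
    (H : Subgroup G) (hHclosed : IsClosed (H : Set G))
    [MeasurableSpace Y] (ν : Measure Y) [IsProbabilityMeasure ν]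
    (S : G → Y → Y) (hS1 : S 1 = id) (hSmul : ∀ g h : G, S (g * h) = S g ∘ S h)
    (hSmp : ∀ g : G, MeasurePreserving (S g) ν ν)
    (hSH : ∀ A : Set Y, MeasurableSet A → (∀ h ∈ H, S h ⁻¹' A = A) →
      ν A = 0 ∨ ν Aᶜ = 0) :
    ∀ B : Set ((G ⧸ H) × Y), MeasurableSet B →
      (∀ t : G, (fun q : (G ⧸ H) × Y => (t • q.1, S t q.2)) ⁻¹' B = B) →
      ((mG.map (QuotientGroup.mk : G → G ⧸ H)).prod ν) B = 0 ∨
        ((mG.map (QuotientGroup.mk : G → G ⧸ H)).prod ν) Bᶜ = 0 := by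
  intro B hB hinv
  -- membership form of invariance
  have hmem : ∀ (t : G) (x : G ⧸ H) (y : Y),
      (t • x, S t y) ∈ B ↔ (x, y) ∈ B := by
    intro t x y
    conv_rhs => rw [← hinv t]
    rfl
  -- the fiber over the identity coset
  set A : Set Y := Prod.mk ((1 : G) : G ⧸ H) ⁻¹' B with hAdef
  have hAm : MeasurableSet A := measurable_prodMk_left hB
  -- every fiber is a measure-preserving preimage of A
  have hfiber : ∀ g : G,
      Prod.mk (QuotientGroup.mk g : G ⧸ H) ⁻¹' B = S g⁻¹ ⁻¹' A := by
    intro g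
    ext y
    have h1 : g⁻¹ • (QuotientGroup.mk g : G ⧸ H) = ((1 : G) : G ⧸ H) := by
      rw [MulAction.Quotient.smul_mk]
      simp
    have := hmem g⁻¹ (QuotientGroup.mk g : G ⧸ H) y
    rw [h1] at this
    simpa [hAdef] using this.symm
  -- fibers all have the same measure as A
  have hfibermeas : ∀ x : G ⧸ H, ν (Prod.mk x ⁻¹' B) = ν A := by
    intro x
    induction x using QuotientGroup.induction_on with
    | H g =>
      rw [hfiber g]
      exact (hSmp g⁻¹).measure_preimage hAm.nullMeasurableSet
  -- A is invariant under S restricted to H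
  have hAinv : ∀ h ∈ H, S h ⁻¹' A = A := by
    intro h hh
    ext y
    have h1 : h • ((1 : G) : G ⧸ H) = ((1 : G) : G ⧸ H) := by
      rw [MulAction.Quotient.smul_mk]
      exact QuotientGroup.eq.mpr (by simpa using H.inv_mem hh)
    have := hmem h ((1 : G) : G ⧸ H) y
    rw [h1] at this
    simpa [hAdef] using this
  rcases hSH A hAm hAinv with h0 | h1
  · left
    rw [Measure.prod_apply hB]
    have : ∀ x : G ⧸ H, ν (Prod.mk x ⁻¹' B) = 0 := fun x => (hfibermeas x).trans h0
    simp [this]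
  · right
    rw [Measure.prod_apply hB.compl]
    have hc : ∀ x : G ⧸ H, ν (Prod.mk x ⁻¹' Bᶜ) = 0 := by
      intro x
      induction x using QuotientGroup.induction_on with
      | H g =>
        have : Prod.mk (QuotientGroup.mk g : G ⧸ H) ⁻¹' Bᶜ = S g⁻¹ ⁻¹' Aᶜ := by
          rw [Set.preimage_compl, hfiber g, ← Set.preimage_compl]
        rw [this, (hSmp g⁻¹).measure_preimage hAm.compl.nullMeasurableSet, h1]
    exact (lintegral_congr hc).trans lintegral_zero
end

section
/- Let p ∈ 𝒫(ℤ) with ℍ := ⟨supp(p) − supp(p)⟩ = dℤ for some d ≥ 1, let (X, μ_p, T) be the one-sided Bernoulli shift with X = ℤ^ℕ, μ_p = p^ℕ, f(x) := x₁, and let S be an ergodic probability preserving transformation of (Y,𝒞,ν). If S^d is not ergodic, then the Rokhlin endomorphism T̃(x,y) = (Tx, S^{f(x)} y) on (X × Y, μ_p × ν) is not exact. -/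
open MeasureTheory Pointwise

private lemma perm_zpow_mem {Y : Type*} (τ : Equiv.Perm Y) (A : Set Y)
    (h : ∀ y, τ y ∈ A ↔ y ∈ A) : ∀ (t : ℤ) (y : Y), (τ ^ t) y ∈ A ↔ y ∈ A := by
  have hn : ∀ (n : ℕ) (y : Y), (τ ^ n) y ∈ A ↔ y ∈ A := by
    intro n
    induction n with
    | zero => intro y; simp
    | succ n ih =>
      intro y
      rw [pow_succ]
      simpa using (ih (τ y)).trans (h y)
  intro t y
  rcases le_or_gt 0 t with ht | ht
  · obtain ⟨n, rfl⟩ := Int.eq_ofNat_of_zero_le ht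
    rw [zpow_natCast]; exact hn n y
  · obtain ⟨n, rfl⟩ : ∃ n : ℕ, t = -(n : ℤ) := ⟨t.natAbs, by omega⟩
    rw [zpow_neg, zpow_natCast]
    have h2 := hn n ((τ ^ n)⁻¹ y)
    simpa using h2.symm

/-- If `⟨supp(p) − supp(p)⟩ = dℤ` with `d ≥ 1` and `S^d` is not ergodic, then the
Rokhlin endomorphism `T̃(x,y) = (Tx, S^{x₁} y)` over the one-sided Bernoulli shift of
the random walk `RW(ℤ,p)` is not exact. -/
theorem rokhlin_not_exact_of_Sd_not_ergodic {Y : Type*} [MeasurableSpace Y]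
    (ν : Measure Y) [IsProbabilityMeasure ν]
    (p : Measure ℤ) [IsProbabilityMeasure p]
    (d : ℕ) (hd : 1 ≤ d)
    (hsupp : AddSubgroup.closure
        ({n : ℤ | 0 < p {n}} - {n : ℤ | 0 < p {n}}) = AddSubgroup.zmultiples (d : ℤ))
    (μp : Measure (ℕ → ℤ)) [IsProbabilityMeasure μp]
    (hcyl : ∀ (n : ℕ) (A : Fin n → Set ℤ), (∀ i, MeasurableSet (A i)) →
      μp {x : ℕ → ℤ | ∀ i : Fin n, x (i : ℕ) ∈ A i} = ∏ i : Fin n, p (A i))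
    (S : Equiv.Perm Y) (hSmp : MeasurePreserving S ν ν)
    (hSerg : ∀ A : Set Y, MeasurableSet A → ⇑S ⁻¹' A = A → ν A = 0 ∨ ν Aᶜ = 0)
    (hSd : ¬ (∀ A : Set Y, MeasurableSet A → ⇑(S ^ (d : ℤ)) ⁻¹' A = A →
      ν A = 0 ∨ ν Aᶜ = 0)) :
    ¬ (∀ A : Set ((ℕ → ℤ) × Y),
        (∀ n : ℕ, ∃ B : Set ((ℕ → ℤ) × Y), MeasurableSet B ∧
          A = (fun q : (ℕ → ℤ) × Y =>
                ((fun k => q.1 (k + 1)), (S ^ (q.1 0)) q.2))^[n] ⁻¹' B) →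
        (μp.prod ν) A = 0 ∨ (μp.prod ν) Aᶜ = 0) := by
  intro hexact
  push_neg at hSd
  obtain ⟨A₀, hA₀m, hA₀inv, hA₀⟩ := hSd
  obtain ⟨h0, h1⟩ := hA₀
  -- support of p
  set SS : Set ℤ := {n : ℤ | 0 < p {n}} with hSSdef
  have hc : ∃ c : ℤ, c ∈ SS := by
    by_contra h
    push_neg at h
    have hz : ∀ n : ℤ, p {n} = 0 := by
      intro n
      have hn : ¬ 0 < p {n} := h n
      exact le_antisymm (not_lt.mp hn) zero_le
    have huniv : p Set.univ = 0 := by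
      rw [show (Set.univ : Set ℤ) = ⋃ n : ℤ, {n} from (Set.iUnion_of_singleton ℤ).symm]
      exact measure_iUnion_null fun n => hz n
    rw [measure_univ] at huniv
    exact one_ne_zero huniv
  obtain ⟨c, hc⟩ := hc
  -- differences of support points are divisible by d
  have hsub : ∀ a b : ℤ, a ∈ SS → b ∈ SS → (d : ℤ) ∣ (a - b) := by
    intro a b ha hb
    have hmem : a - b ∈ AddSubgroup.closure (SS - SS) :=
      AddSubgroup.subset_closure (Set.sub_mem_sub ha hb)
    rw [hsupp, AddSubgroup.mem_zmultiples_iff] at hmem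
    obtain ⟨k, hk⟩ := hmem
    exact ⟨k, by rw [← hk, smul_eq_mul]; ring⟩
  -- basic facts about A₀ and powers of S
  have hd1 : ∀ y, (S ^ (d : ℤ)) y ∈ A₀ ↔ y ∈ A₀ := by
    intro y
    nth_rewrite 2 [← hA₀inv]
    rfl
  have hG : ∀ (k : ℤ) (y : Y), (d : ℤ) ∣ k → ((S ^ k) y ∈ A₀ ↔ y ∈ A₀) := by
    intro k y hk
    obtain ⟨t, rfl⟩ := hk
    rw [zpow_mul]
    exact perm_zpow_mem (S ^ (d : ℤ)) A₀ hd1 t y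
  have hG2 : ∀ (k j : ℤ) (y : Y), (d : ℤ) ∣ (k - j) →
      ((S ^ k) y ∈ A₀ ↔ (S ^ j) y ∈ A₀) := by
    intro k j y hkj
    have hkey : (S ^ k) y = (S ^ (k - j)) ((S ^ j) y) := by
      rw [← Equiv.Perm.mul_apply, ← zpow_add, sub_add_cancel]
    rw [hkey]
    exact hG (k - j) _ hkj
  -- the shift/skew product
  set Tt : (ℕ → ℤ) × Y → (ℕ → ℤ) × Y :=
    fun q => ((fun k => q.1 (k + 1)), (S ^ (q.1 0)) q.2) with hTt
  -- partial sums
  set sn : ℕ → (ℕ → ℤ) → ℤ := fun n x => ∑ i ∈ Finset.range n, x i with hsn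
  have hiter : ∀ (m : ℕ) (q : (ℕ → ℤ) × Y),
      Tt^[m] q = ((fun k => q.1 (k + m)), (S ^ (sn m q.1)) q.2) := by
    intro m
    induction m with
    | zero => intro q; simp [hsn]
    | succ m ih =>
      intro q
      rw [Function.iterate_succ_apply, ih]
      have h1 : (fun k => (Tt q).1 (k + m)) = fun k => q.1 (k + (m + 1)) := by
        funext k
        rfl
      have h2 : (S ^ sn m (Tt q).1) (Tt q).2 = (S ^ sn (m + 1) q.1) q.2 := by
        show (S ^ (sn m (fun k => q.1 (k + 1)))) ((S ^ (q.1 0)) q.2)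
            = (S ^ (sn (m + 1) q.1)) q.2
        have hsum : sn m (fun k => q.1 (k + 1)) + q.1 0 = sn (m + 1) q.1 := by
          have h3 : sn m (fun k => q.1 (k + 1)) = ∑ i ∈ Finset.range m, q.1 (i + 1) := rfl
          have h3' : sn (m + 1) q.1 = ∑ i ∈ Finset.range (m + 1), q.1 i := rfl
          rw [h3, h3', Finset.sum_range_succ']
        rw [← Equiv.Perm.mul_apply, ← zpow_add, hsum]
      rw [Prod.mk.injEq]
      exact ⟨h1, h2⟩
  -- splitting of partial sums
  have hsplit : ∀ (x : ℕ → ℤ) (m n : ℕ),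
      sn (n + m) x = sn m x + ∑ i ∈ Finset.range n, x (i + m) := by
    intro x m n
    induction n with
    | zero => simp
    | succ n ih =>
      have : n + 1 + m = (n + m) + 1 := by ring
      rw [this]
      simp only [hsn] at ih ⊢
      rw [Finset.sum_range_succ, Finset.sum_range_succ, ih]
      ring
  -- the tail set
  set A : Set ((ℕ → ℤ) × Y) :=
    {q | ∃ N : ℕ, ∀ n ≥ N, (S ^ (sn n q.1 - (n : ℤ) * c)) q.2 ∈ A₀} with hA
  set B : ℕ → Set ((ℕ → ℤ) × Y) :=
    fun m => {q | ∃ N : ℕ, ∀ n ≥ N,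
      (S ^ (sn n q.1 - ((n + m : ℕ) : ℤ) * c)) q.2 ∈ A₀} with hB
  -- A is in every preimage σ-algebra
  have hAB : ∀ m : ℕ, A = Tt^[m] ⁻¹' (B m) := by
    intro m
    ext q
    simp only [hA, hB, Set.mem_preimage, hiter, Set.mem_setOf_eq]
    have key : ∀ n : ℕ,
        (S ^ (sn n (fun k => q.1 (k + m)) - ((n + m : ℕ) : ℤ) * c)) ((S ^ (sn m q.1)) q.2)
        = (S ^ (sn (n + m) q.1 - ((n + m : ℕ) : ℤ) * c)) q.2 := by
      intro n
      rw [← Equiv.Perm.mul_apply, ← zpow_add]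
      have h4 : sn n (fun k => q.1 (k + m)) = ∑ i ∈ Finset.range n, q.1 (i + m) := rfl
      have h5 := hsplit q.1 m n
      have h6 : sn n (fun k => q.1 (k + m)) - ((n + m : ℕ) : ℤ) * c + sn m q.1
          = sn (n + m) q.1 - ((n + m : ℕ) : ℤ) * c := by
        rw [h4, h5]; ring
      rw [h6]
    constructor
    · rintro ⟨N, hN⟩
      exact ⟨N, fun n hn => by rw [key n]; exact hN (n + m) (le_add_right hn)⟩
    · rintro ⟨N, hN⟩
      refine ⟨N + m, fun n hn => ?_⟩
      have h2 := hN (n - m) (by omega)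
      rw [key (n - m)] at h2
      have h3 : n - m + m = n := by omega
      rw [h3] at h2
      exact h2
  -- measurability of the B m
  have hsnm : ∀ n : ℕ, Measurable (sn n) := by
    intro n
    exact Finset.measurable_sum _ fun i _ => measurable_pi_apply i
  have hCmeas : ∀ (g : (ℕ → ℤ) → ℤ), Measurable g →
      MeasurableSet {q : (ℕ → ℤ) × Y | (S ^ (g q.1)) q.2 ∈ A₀} := by
    intro g hg
    have hrw : {q : (ℕ → ℤ) × Y | (S ^ (g q.1)) q.2 ∈ A₀}
        = ⋃ k : ℤ, ({x | g x = k} ×ˢ {y | (S ^ k) y ∈ A₀}) := by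
      ext q
      simp only [Set.mem_setOf_eq, Set.mem_iUnion, Set.mem_prod]
      exact ⟨fun h => ⟨g q.1, rfl, h⟩, fun ⟨k, hk, h⟩ => by rw [hk]; exact h⟩
    rw [hrw]
    refine MeasurableSet.iUnion fun k => MeasurableSet.prod
      (hg (measurableSet_singleton k)) ?_
    have hdz : (d : ℤ) ≠ 0 := by exact_mod_cast Nat.one_le_iff_ne_zero.mp hd
    have hmod : ∀ y : Y, ((S ^ k) y ∈ A₀ ↔ (S ^ ((k % (d : ℤ)).toNat)) y ∈ A₀) := by
      intro y
      have h1 : ((k % (d : ℤ)).toNat : ℤ) = k % (d : ℤ) :=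
        Int.toNat_of_nonneg (Int.emod_nonneg k hdz)
      rw [← zpow_natCast S (k % (d : ℤ)).toNat, h1]
      refine hG2 k (k % (d : ℤ)) y ?_
      have : k % (d : ℤ) = k - (d : ℤ) * (k / (d : ℤ)) := Int.emod_def k (d : ℤ)
      exact ⟨k / (d : ℤ), by omega⟩
    have hrw2 : {y : Y | (S ^ k) y ∈ A₀}
        = (⇑S)^[(k % (d : ℤ)).toNat] ⁻¹' A₀ := by
      ext y
      simp only [Set.mem_setOf_eq, Set.mem_preimage, ← Equiv.Perm.coe_pow]
      exact hmod y
    rw [hrw2]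
    exact (hSmp.measurable.iterate _) hA₀m
  have hBmeas : ∀ m : ℕ, MeasurableSet (B m) := by
    intro m
    have hrw : B m = ⋃ N : ℕ, ⋂ n : ℕ, ⋂ (_ : n ≥ N),
        {q : (ℕ → ℤ) × Y | (S ^ (sn n q.1 - ((n + m : ℕ) : ℤ) * c)) q.2 ∈ A₀} := by
      ext q
      simp [hB]
    rw [hrw]
    refine MeasurableSet.iUnion fun N => MeasurableSet.iInter fun n =>
      MeasurableSet.iInter fun _ => ?_
    exact hCmeas _ ((hsnm n).sub measurable_const)
  -- the good set
  set Good : Set (ℕ → ℤ) := {x | ∀ i : ℕ, x i ∈ SS} with hGood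
  have hGoodc : μp Goodᶜ = 0 := by
    have hrw : Goodᶜ = ⋃ i : ℕ, {x : ℕ → ℤ | x i ∈ SSᶜ} := by
      ext x
      simp [hGood]
    rw [hrw]
    refine measure_iUnion_null fun i => ?_
    have hSS0 : p SSᶜ = 0 := by
      rw [show SSᶜ = ⋃ n ∈ SSᶜ, ({n} : Set ℤ) from (Set.biUnion_of_singleton SSᶜ).symm,
        measure_biUnion_null_iff (Set.to_countable _)]
      intro n hn
      have hn2 : ¬ 0 < p {n} := hn
      exact le_antisymm (not_lt.mp hn2) zero_le
    have heq : {x : ℕ → ℤ | x i ∈ SSᶜ}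
        = {x : ℕ → ℤ | ∀ j : Fin (i + 1),
            x (j : ℕ) ∈ (fun j : Fin (i + 1) => if (j : ℕ) = i then SSᶜ else Set.univ) j} := by
      ext x
      simp only [Set.mem_setOf_eq]
      constructor
      · intro h j
        by_cases hj : (j : ℕ) = i
        · rw [if_pos hj, hj]; exact h
        · rw [if_neg hj]; trivial
      · intro h
        have h6 := h ⟨i, Nat.lt_succ_self i⟩
        simpa using h6
    rw [heq, hcyl (i + 1) _ (fun j => (Set.to_countable _).measurableSet)]
    refine Finset.prod_eq_zero (Finset.mem_univ (⟨i, Nat.lt_succ_self i⟩ : Fin (i + 1))) ?_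
    simp [hSS0]
  have hGoodmeas : MeasurableSet Good := by
    have : Good = ⋂ i : ℕ, (fun x : ℕ → ℤ => x i) ⁻¹' SS := by
      ext x; simp [hGood]
    rw [this]
    exact MeasurableSet.iInter fun i =>
      (measurable_pi_apply i) ((Set.to_countable SS).measurableSet)
  have hGood1 : μp Good = 1 := by
    have h2 := measure_add_measure_compl (μ := μp) hGoodmeas
    rw [hGoodc, add_zero, measure_univ] at h2
    exact h2
  -- divisibility on the good set
  have hdvd : ∀ x ∈ Good, ∀ n : ℕ, (d : ℤ) ∣ (sn n x - (n : ℤ) * c) := by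
    intro x hx n
    have : sn n x - (n : ℤ) * c = ∑ i ∈ Finset.range n, (x i - c) := by
      rw [Finset.sum_sub_distrib, Finset.sum_const, Finset.card_range, nsmul_eq_mul]
    rw [this]
    exact Finset.dvd_sum fun i _ => hsub (x i) c (hx i) hc
  -- inclusions
  have hA_super : Good ×ˢ A₀ ⊆ A := by
    rintro ⟨x, y⟩ ⟨hx, hy⟩
    exact ⟨0, fun n _ => (hG _ y (hdvd x hx n)).mpr hy⟩
  have hAc_super : Good ×ˢ A₀ᶜ ⊆ Aᶜ := by
    rintro ⟨x, y⟩ ⟨hx, hy⟩ hmem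
    obtain ⟨N, hN⟩ := hmem
    exact hy ((hG _ y (hdvd x hx N)).mp (hN N le_rfl))
  -- apply exactness
  obtain h | h := hexact A (fun m => ⟨B m, hBmeas m, hAB m⟩)
  · apply h0
    have hle : (μp.prod ν) (Good ×ˢ A₀) ≤ (μp.prod ν) A := measure_mono hA_super
    rw [h, le_zero_iff, Measure.prod_prod, hGood1, one_mul] at hle
    exact hle
  · apply h1
    have hle : (μp.prod ν) (Good ×ˢ A₀ᶜ) ≤ (μp.prod ν) Aᶜ := measure_mono hAc_super
    rw [h, le_zero_iff, Measure.prod_prod, hGood1, one_mul] at hle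
    exact hle
end
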